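/- For every integer k ≥ 1 and every antidiagonal k×k matrix S (i.e. S_{ij} = 0 unless j = k+1−i) with entries in a commutative ring, one has (S⊗S)·R_k(q) = R_k(q)^T·(S⊗S), where R_k(q) = Σ_{i,j} e_{ii}⊗e_{jj} + (q−1) Σ_i e_{ii}⊗e_{ii} + (q−q^{-1}) Σ_{j<i} e_{ij}⊗e_{ji} and T is full transposition. -/

import Mathlib

open Matrix Kronecker

/-- The trigonometric `R`-matrix over a commutative ring, `q` an invertible scalar. -/
def Rmat (k : ℕ) {K : Type*} [CommRing K] (q : Kˣ) :
    Matrix (Fin k × Fin k) (Fin k × Fin k) K :=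
  (∑ i : Fin k, ∑ j : Fin k, single i i (1 : K) ⊗ₖ single j j (1 : K))
    + ((q : K) - 1) • (∑ i : Fin k, single i i (1 : K) ⊗ₖ single i i (1 : K))
    + ((q : K) - ((q⁻¹ : Kˣ) : K)) • (∑ i : Fin k, ∑ j : Fin k,
        if j < i then single i j (1 : K) ⊗ₖ single j i (1 : K) else 0)

lemma auxA1 (k : ℕ) {K : Type*} [CommRing K] (x y c d : Fin k) :
    (∑ i : Fin k, ∑ j : Fin k,
      single i i (1 : K) ⊗ₖ single j j (1 : K)) (x, y) (c, d)
      = (if x = c ∧ y = d then 1 else 0) := by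
  simp only [Matrix.sum_apply, kroneckerMap_apply, single, of_apply]
  rw [← Finset.sum_mul_sum]
  simp only [ite_and, Finset.sum_ite_eq', Finset.mem_univ, if_true]
  split_ifs <;> first | ring1 | (exfalso; tauto)

lemma auxA2 (k : ℕ) {K : Type*} [CommRing K] (x y c d : Fin k) :
    (∑ i : Fin k,
      single i i (1 : K) ⊗ₖ single i i (1 : K)) (x, y) (c, d)
      = (if x = y ∧ x = c ∧ x = d then 1 else 0) := by
  simp only [Matrix.sum_apply, kroneckerMap_apply, single, of_apply]
  rw [Finset.sum_eq_single x]
  · split_ifs <;> first | ring1 | (exfalso; tauto)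
  · intro b _ hb; split_ifs <;> first | ring1 | (exfalso; tauto)
  · simp

lemma auxA3 (k : ℕ) {K : Type*} [CommRing K] (x y c d : Fin k) :
    (∑ i : Fin k, ∑ j : Fin k,
      if j < i then single i j (1 : K) ⊗ₖ single j i (1 : K) else 0) (x, y) (c, d)
      = (if y < x ∧ y = c ∧ x = d then 1 else 0) := by
  simp only [Matrix.sum_apply]
  rw [Finset.sum_eq_single x]
  · rw [Finset.sum_eq_single y]
    · simp only [apply_ite (fun M : Matrix (Fin k × Fin k) (Fin k × Fin k) K => M (x, y) (c, d)),
        kroneckerMap_apply, single, of_apply, Matrix.zero_apply]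
      split_ifs <;> first | ring1 | (exfalso; tauto)
    · intro b _ hb
      simp only [apply_ite (fun M : Matrix (Fin k × Fin k) (Fin k × Fin k) K => M (x, y) (c, d)),
        kroneckerMap_apply, single, of_apply, Matrix.zero_apply]
      split_ifs <;> first | ring1 | (exfalso; tauto)
    · simp
  · intro b _ hb
    apply Finset.sum_eq_zero
    intro j _
    simp only [apply_ite (fun M : Matrix (Fin k × Fin k) (Fin k × Fin k) K => M (x, y) (c, d)),
      kroneckerMap_apply, single, of_apply, Matrix.zero_apply]
    split_ifs <;> first | ring1 | (exfalso; tauto)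
  · simp

lemma Rmat_apply (k : ℕ) {K : Type*} [CommRing K] (q : Kˣ) (x y c d : Fin k) :
    Rmat k q (x, y) (c, d) =
      (if x = c ∧ y = d then 1 else 0)
      + ((q : K) - 1) * (if x = y ∧ x = c ∧ x = d then 1 else 0)
      + ((q : K) - ((q⁻¹ : Kˣ) : K)) * (if y < x ∧ y = c ∧ x = d then 1 else 0) := by
  simp [Rmat, Matrix.add_apply, Matrix.smul_apply, auxA1, auxA2, auxA3, smul_eq_mul]

/-- for every antidiagonal `k×k` matrix `S` (i.e. `S i j = 0` unless
`j = k+1−i`, in `Fin k` terms `j = i.rev`), one has `(S⊗S)·R_k(q) = R_k(q)ᵀ·(S⊗S)`. -/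
theorem kronecker_antidiag_Rmat (k : ℕ) (hk : 1 ≤ k) {K : Type*} [CommRing K] (q : Kˣ)
    (S : Matrix (Fin k) (Fin k) K) (hS : ∀ i j : Fin k, j ≠ i.rev → S i j = 0) :
    (S ⊗ₖ S) * Rmat k q = (Rmat k q)ᵀ * (S ⊗ₖ S) := by
  ext ⟨a, b⟩ ⟨c, d⟩
  have hL : ((S ⊗ₖ S) * Rmat k q) (a, b) (c, d)
      = S a a.rev * S b b.rev * Rmat k q (a.rev, b.rev) (c, d) := by
    rw [Matrix.mul_apply, Fintype.sum_prod_type]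
    rw [Finset.sum_eq_single (Fin.rev a)]
    · rw [Finset.sum_eq_single (Fin.rev b)]
      · rw [kroneckerMap_apply]
      · intro y _ hy
        rw [kroneckerMap_apply, hS b y (by simpa [Fin.rev_ne_iff] using hy), mul_zero, zero_mul]
      · simp
    · intro x _ hx
      apply Finset.sum_eq_zero; intro y _
      rw [kroneckerMap_apply, hS a x (by simpa [Fin.rev_ne_iff] using hx), zero_mul, zero_mul]
    · simp
  have hR : ((Rmat k q)ᵀ * (S ⊗ₖ S)) (a, b) (c, d)
      = Rmat k q (c.rev, d.rev) (a, b) * (S c.rev c * S d.rev d) := by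
    rw [Matrix.mul_apply, Fintype.sum_prod_type]
    rw [Finset.sum_eq_single (Fin.rev c)]
    · rw [Finset.sum_eq_single (Fin.rev d)]
      · rw [kroneckerMap_apply, Matrix.transpose_apply]
      · intro y _ hy
        rw [kroneckerMap_apply, hS y d (by intro h; exact hy (by rw [h, Fin.rev_rev])),
          mul_zero, mul_zero]
      · simp
    · intro x _ hx
      apply Finset.sum_eq_zero; intro y _
      rw [kroneckerMap_apply, hS x c (by intro h; exact hx (by rw [h, Fin.rev_rev])),
        zero_mul, mul_zero]
    · simp
  rw [hL, hR, Rmat_apply _ _ _ _ _ _, Rmat_apply _ _ _ _ _ _]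
  have e1 : S a a.rev * S b b.rev * (if a.rev = c ∧ b.rev = d then (1:K) else 0)
      = (if c.rev = a ∧ d.rev = b then (1:K) else 0) * (S c.rev c * S d.rev d) := by
    by_cases h : a.rev = c ∧ b.rev = d
    · obtain ⟨h1, h2⟩ := h; subst h1; subst h2
      simp [Fin.rev_rev, mul_comm]
    · rw [if_neg h, if_neg, mul_zero, zero_mul]
      rintro ⟨h1, h2⟩
      exact h ⟨by rw [← h1, Fin.rev_rev], by rw [← h2, Fin.rev_rev]⟩
  have e2 : S a a.rev * S b b.rev * (if a.rev = b.rev ∧ a.rev = c ∧ a.rev = d then (1:K) else 0)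
      = (if c.rev = d.rev ∧ c.rev = a ∧ c.rev = b then (1:K) else 0)
        * (S c.rev c * S d.rev d) := by
    by_cases h : a.rev = b.rev ∧ a.rev = c ∧ a.rev = d
    · obtain ⟨hab, h1, h2⟩ := h
      have hab' : a = b := Fin.rev_inj.mp hab
      subst hab'; subst h1; subst h2
      simp [Fin.rev_rev]
    · rw [if_neg h, if_neg, mul_zero, zero_mul]
      rintro ⟨h1, h2, h3⟩
      have hcd : c = d := Fin.rev_inj.mp h1
      have hab : a = b := by rw [← h2, ← h3]
      exact h ⟨by rw [hab], by rw [← h2, Fin.rev_rev], by rw [← hcd, ← h2, Fin.rev_rev]⟩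
  have e3 : S a a.rev * S b b.rev * (if b.rev < a.rev ∧ b.rev = c ∧ a.rev = d then (1:K) else 0)
      = (if d.rev < c.rev ∧ d.rev = a ∧ c.rev = b then (1:K) else 0)
        * (S c.rev c * S d.rev d) := by
    by_cases h : b.rev < a.rev ∧ b.rev = c ∧ a.rev = d
    · obtain ⟨hlt, h1, h2⟩ := h; subst h1; subst h2
      have hab : a < b := by rwa [Fin.rev_lt_rev] at hlt
      simp [Fin.rev_rev, hlt, hab, mul_comm]
    · rw [if_neg h, if_neg, mul_zero, zero_mul]
      rintro ⟨hlt, h1, h2⟩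
      refine h ⟨?_, by rw [← h2, Fin.rev_rev], by rw [← h1, Fin.rev_rev]⟩
      rw [← h1, ← h2, Fin.rev_lt_rev]; exact hlt
  linear_combination e1 + ((q : K) - 1) * e2 + ((q : K) - ((q⁻¹ : Kˣ) : K)) * e3
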